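/- For every odd integer d ≥ 3, in the presented group on two generators a, b with relators a^d, a^{d−2} b², and b^{d−2} a², the images of a and b are equal. -/

import Mathlib

/-- The generator `a` of the free group on two generators. -/
def genA : FreeGroup (Fin 2) := FreeGroup.of 0

/-- The generator `b` of the free group on two generators. -/
def genB : FreeGroup (Fin 2) := FreeGroup.of 1

/-- The relators `a^d`, `a^(d-2) b²` and `b^(d-2) a²`. -/
def oddRels (d : ℕ) : Set (FreeGroup (Fin 2)) :=
  {genA ^ d, genA ^ (d - 2) * genB ^ 2, genB ^ (d - 2) * genA ^ 2}

/-- For every odd `d ≥ 3`, in the presented group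
`⟨a, b | a^d, a^(d-2) b², b^(d-2) a²⟩`, the images of `a` and `b` are equal. -/
theorem odd_rels_force_eq (d : ℕ) (hd : 3 ≤ d) (hodd : Odd d) :
    PresentedGroup.of (rels := oddRels d) 0 = PresentedGroup.of 1 := by
  obtain ⟨k, hk⟩ := hodd
  have hk1 : 1 ≤ k := by omega
  set f := (QuotientGroup.mk' (Subgroup.normalClosure (oddRels d))) with hf
  have hrel : ∀ r ∈ oddRels d, f r = 1 := fun r hr =>
    (QuotientGroup.eq_one_iff r).mpr (Subgroup.subset_normalClosure hr)
  set A := f genA with hA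
  set B := f genB with hB
  have h1 : A ^ d = 1 := by
    have := hrel (genA ^ d) (by simp [oddRels])
    simpa using this
  have h2 : A ^ (d - 2) * B ^ 2 = 1 := by
    have := hrel (genA ^ (d - 2) * genB ^ 2) (by simp [oddRels])
    simpa using this
  have h3 : B ^ (d - 2) * A ^ 2 = 1 := by
    have := hrel (genB ^ (d - 2) * genA ^ 2) (by simp [oddRels])
    simpa using this
  have hsum : d - 2 + 2 = d := by omega
  have hA2 : A ^ (d - 2) * A ^ 2 = 1 := by rw [← pow_add, hsum]; exact h1
  have hB2A2 : B ^ 2 = A ^ 2 := by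
    have e1 : B ^ 2 = (A ^ (d - 2))⁻¹ := eq_inv_of_mul_eq_one_right h2
    have e2 : A ^ 2 = (A ^ (d - 2))⁻¹ := eq_inv_of_mul_eq_one_right hA2
    rw [e1, e2]
  have hBd : B ^ d = 1 := by
    have : B ^ d = B ^ (d - 2) * B ^ 2 := by rw [← pow_add, hsum]
    rw [this, hB2A2]; exact h3
  have key : ∀ x : PresentedGroup (oddRels d), x ^ d = 1 → (x ^ 2) ^ (k + 1) = x := by
    intro x hx
    have h : 2 * (k + 1) = d + 1 := by omega
    rw [← pow_mul, h, pow_succ, hx, one_mul]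
  show A = B
  rw [← key A h1, ← key B hBd]; exact congrArg (· ^ (k + 1)) hB2A2.symm
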